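/- Let M ≥ 2 be an integer, θ, d > 0 reals, and consider the birth-death chain on {0,...,M} with rates r(i,i+1) = θ(M-i)(i+d) and r(i,i-1) = θ i(M-i+2d) for 1 ≤ i ≤ M-1, absorbed at 0 and M. Starting from 1, the probability of absorption at M is at least 1/(M·exp(2d(1+log M))) and at most exp(d(1+log M))/M, and the expected absorption time is at most exp(d(1+log M))·2(1+log M)/(θM). -/

import Mathlib

private lemma harmonic_le (k : ℕ) (hk : 1 ≤ k) :
    ∑ m ∈ Finset.Icc 1 k, 1/(m:ℝ) ≤ 1 + Real.log k := by
  induction k with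
  | zero => omega
  | succ n ih =>
    rcases Nat.lt_or_ge n 1 with h | h
    · interval_cases n
      norm_num
    · have hsum := ih h
      rw [Finset.sum_Icc_succ_top (by omega : 1 ≤ n + 1)]
      have hn0 : (0:ℝ) < n := by exact_mod_cast h
      have key : (1:ℝ)/(n+1) ≤ Real.log (n+1) - Real.log n := by
        have hlog := Real.log_le_sub_one_of_pos (show (0:ℝ) < (n:ℝ)/(n+1) by positivity)
        rw [Real.log_div (by positivity) (by positivity)] at hlog
        have heq : (n:ℝ)/(n+1) - 1 = -(1/(n+1)) := by field_simp; ring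
        linarith
      push_cast
      push_cast at hsum
      linarith

private lemma sum_reflect (M : ℕ) (f : ℕ → ℝ) :
    ∑ m ∈ Finset.Icc 1 (M-1), f (M - m) = ∑ m ∈ Finset.Icc 1 (M-1), f m := by
  apply Finset.sum_nbij' (fun i => M - i) (fun i => M - i) <;>
    intros <;> simp_all [Finset.mem_Icc] <;> omega

private lemma aux_eq1 (t n mn mr ex : ℝ) (ht : t ≠ 0) (hn : n ≠ 0) (hmn : mn ≠ 0)
    (hmr0 : mr ≠ 0) (hmr : n + mn = mr) :
    (1/(t*n*mn)) * ex = (ex/t) * ((1/mr) * (1/n + 1/mn)) := by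
  subst hmr
  field_simp
  ring

private lemma aux_eq2 (t mr ex x : ℝ) (ht : t ≠ 0) (hmr : mr ≠ 0) :
    (ex/t) * ((1/mr) * x) = ex * x / (t*mr) := by
  field_simp

theorem stmt6 (M : ℕ) (hM : 2 ≤ M) (θ d : ℝ) (hθ : 0 < θ) (hd : 0 < d)
    (a b : ℕ → ℝ)
    (ha : ∀ i, a i = θ * ((M : ℝ) - i) * (i + d))
    (hb : ∀ i, b i = θ * (i : ℝ) * ((M : ℝ) - i + 2 * d))
    (P E : ℝ)
    (hP : P = 1 / (∑ j ∈ Finset.Icc 1 M, ∏ m ∈ Finset.Icc 1 (j - 1), b m / a m))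
    (hE : E ≤ ∑ n ∈ Finset.Icc 1 (M - 1), (1 / b n) * ∏ m ∈ Finset.Icc 1 (n - 1), a m / b m) :
    1 / ((M : ℝ) * Real.exp (2 * d * (1 + Real.log M))) ≤ P ∧
    P ≤ Real.exp (d * (1 + Real.log M)) / M ∧
    E ≤ Real.exp (d * (1 + Real.log M)) * (2 * (1 + Real.log M)) / (θ * M) := by
  have hM1 : (1:ℝ) ≤ (M:ℝ) := by exact_mod_cast (by omega : 1 ≤ M)
  have hM0 : (0:ℝ) < (M:ℝ) := by linarith
  set L : ℝ := 1 + Real.log M with hLdef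
  have hlog0 : 0 ≤ Real.log M := Real.log_nonneg hM1
  have hL1 : 1 ≤ L := by rw [hLdef]; linarith
  have hL0 : 0 < L := by linarith
  set H : ℝ := ∑ m ∈ Finset.Icc 1 (M-1), 1/(m:ℝ) with hHdef
  have hH0 : 0 ≤ H := Finset.sum_nonneg (fun m _ => by positivity)
  have hHL : H ≤ L := by
    have h1 := harmonic_le (M-1) (by omega)
    have h2 : Real.log ((M-1 : ℕ):ℝ) ≤ Real.log M := by
      apply Real.log_le_log
      · exact_mod_cast (by omega : 1 ≤ M - 1)
      · exact_mod_cast (by omega : M - 1 ≤ M)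
    rw [hLdef]; linarith
  -- basic facts about members of Icc 1 (M-1)
  have hfacts : ∀ m ∈ Finset.Icc 1 (M-1), (1:ℝ) ≤ (m:ℝ) ∧ (m:ℝ) + 1 ≤ (M:ℝ) := by
    intro m hm
    rw [Finset.mem_Icc] at hm
    refine ⟨by exact_mod_cast hm.1, ?_⟩
    exact_mod_cast (by omega : m + 1 ≤ M)
  have hapos : ∀ m ∈ Finset.Icc 1 (M-1), 0 < a m := by
    intro m hm
    obtain ⟨h1, h2⟩ := hfacts m hm
    rw [ha]
    exact mul_pos (mul_pos hθ (by linarith)) (by linarith)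
  have hbpos : ∀ m ∈ Finset.Icc 1 (M-1), 0 < b m := by
    intro m hm
    obtain ⟨h1, h2⟩ := hfacts m hm
    rw [hb]
    exact mul_pos (mul_pos hθ (by linarith)) (by linarith)
  have hba_pos : ∀ m ∈ Finset.Icc 1 (M-1), 0 < b m / a m :=
    fun m hm => div_pos (hbpos m hm) (hapos m hm)
  -- pointwise bound: b/a ≤ exp (2d/(M-m))
  have hba_le : ∀ m ∈ Finset.Icc 1 (M-1), b m / a m ≤ Real.exp (2*d/((M:ℝ)-m)) := by
    intro m hm
    obtain ⟨h1, h2⟩ := hfacts m hm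
    have hMm : (0:ℝ) < (M:ℝ) - m := by linarith
    have step1 : b m / a m ≤ ((M:ℝ)-m+2*d)/((M:ℝ)-m) := by
      rw [ha, hb, div_le_div_iff₀ (mul_pos (mul_pos hθ (by linarith)) (by linarith)) hMm]
      nlinarith [mul_pos hθ hMm, mul_pos (mul_pos hθ hMm) hd, mul_pos (mul_pos (mul_pos hθ hMm) hd) (show (0:ℝ) < (M:ℝ)-m+2*d by linarith)]
    have step2 : ((M:ℝ)-m+2*d)/((M:ℝ)-m) = 2*d/((M:ℝ)-m) + 1 := by
      field_simp
      ring
    have step3 := Real.add_one_le_exp (2*d/((M:ℝ)-m))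
    linarith
  -- pointwise bound: exp (-(d/m)) ≤ b/a
  have hba_ge : ∀ m ∈ Finset.Icc 1 (M-1), Real.exp (-(d/(m:ℝ))) ≤ b m / a m := by
    intro m hm
    obtain ⟨h1, h2⟩ := hfacts m hm
    have hm0 : (0:ℝ) < m := by linarith
    have hMm : (0:ℝ) < (M:ℝ) - m := by linarith
    have s1 : (m:ℝ)/((m:ℝ)+d) ≤ b m / a m := by
      rw [ha, hb, div_le_div_iff₀ (by linarith) (mul_pos (mul_pos hθ hMm) (by linarith))]
      nlinarith [mul_pos (mul_pos hθ hm0) hd, mul_pos (mul_pos (mul_pos hθ hm0) hd) (show (0:ℝ) < (m:ℝ)+d by linarith)]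
    have s2 : Real.exp (-(d/(m:ℝ))) ≤ (m:ℝ)/((m:ℝ)+d) := by
      rw [Real.exp_neg, inv_eq_one_div, div_le_div_iff₀ (Real.exp_pos _) (by linarith)]
      have h3 := Real.add_one_le_exp (d/(m:ℝ))
      have h4 : (m:ℝ)*(d/(m:ℝ)) = d := by field_simp
      nlinarith [mul_le_mul_of_nonneg_left h3 hm0.le]
    linarith
  -- pointwise bound: a/b ≤ exp (d/m)
  have hab_le : ∀ m ∈ Finset.Icc 1 (M-1), a m / b m ≤ Real.exp (d/(m:ℝ)) := by
    intro m hm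
    obtain ⟨h1, h2⟩ := hfacts m hm
    have hm0 : (0:ℝ) < m := by linarith
    have hMm : (0:ℝ) < (M:ℝ) - m := by linarith
    have s1 : a m / b m ≤ ((m:ℝ)+d)/(m:ℝ) := by
      rw [ha, hb, div_le_div_iff₀ (mul_pos (mul_pos hθ hm0) (by linarith)) hm0]
      nlinarith [mul_pos (mul_pos hθ hm0) hd, mul_pos (mul_pos (mul_pos hθ hm0) hd) (show (0:ℝ) < (m:ℝ)+d by linarith)]
    have s2 : ((m:ℝ)+d)/(m:ℝ) = d/(m:ℝ) + 1 := by field_simp; ring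
    have s3 := Real.add_one_le_exp (d/(m:ℝ))
    linarith
  -- reflected harmonic sum
  have hreflect : ∑ m ∈ Finset.Icc 1 (M-1), 1/((M:ℝ)-m) = H := by
    rw [hHdef]
    rw [show ∑ m ∈ Finset.Icc 1 (M-1), 1/((M:ℝ)-m)
        = ∑ m ∈ Finset.Icc 1 (M-1), (fun k : ℕ => 1/(k:ℝ)) (M - m) from
      Finset.sum_congr rfl (by
        intro m hm
        rw [Finset.mem_Icc] at hm
        simp only
        rw [Nat.cast_sub (by omega)])]
    simpa using sum_reflect M (fun k : ℕ => 1/(k:ℝ))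
  -- sum bounds over initial segments
  have sumg : ∀ k, k ≤ M - 1 → ∑ m ∈ Finset.Icc 1 k, 2*d/((M:ℝ)-m) ≤ 2*d*L := by
    intro k hk
    have sub : Finset.Icc 1 k ⊆ Finset.Icc 1 (M-1) := Finset.Icc_subset_Icc_right hk
    have s1 : ∑ m ∈ Finset.Icc 1 k, 2*d/((M:ℝ)-m)
        ≤ ∑ m ∈ Finset.Icc 1 (M-1), 2*d/((M:ℝ)-m) := by
      apply Finset.sum_le_sum_of_subset_of_nonneg sub
      intro m hm _
      obtain ⟨h1, h2⟩ := hfacts m hm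
      have : (0:ℝ) < (M:ℝ) - m := by linarith
      positivity
    have s2 : ∑ m ∈ Finset.Icc 1 (M-1), 2*d/((M:ℝ)-m) = 2*d*H := by
      rw [← hreflect, Finset.mul_sum]
      exact Finset.sum_congr rfl (fun m _ => by ring)
    have s3 : 2*d*H ≤ 2*d*L := mul_le_mul_of_nonneg_left hHL (by positivity)
    calc ∑ m ∈ Finset.Icc 1 k, 2*d/((M:ℝ)-m)
        ≤ ∑ m ∈ Finset.Icc 1 (M-1), 2*d/((M:ℝ)-m) := s1
      _ = 2*d*H := s2
      _ ≤ 2*d*L := s3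
  have sumd : ∀ k, k ≤ M - 1 → ∑ m ∈ Finset.Icc 1 k, d/(m:ℝ) ≤ d*L := by
    intro k hk
    have sub : Finset.Icc 1 k ⊆ Finset.Icc 1 (M-1) := Finset.Icc_subset_Icc_right hk
    have s1 : ∑ m ∈ Finset.Icc 1 k, d/(m:ℝ) ≤ ∑ m ∈ Finset.Icc 1 (M-1), d/(m:ℝ) := by
      apply Finset.sum_le_sum_of_subset_of_nonneg sub
      intro m hm _
      obtain ⟨h1, _⟩ := hfacts m hm
      positivity
    have s2 : ∑ m ∈ Finset.Icc 1 (M-1), d/(m:ℝ) = d*H := by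
      rw [hHdef, Finset.mul_sum]
      exact Finset.sum_congr rfl (fun m _ => by ring)
    have s3 : d*H ≤ d*L := mul_le_mul_of_nonneg_left hHL hd.le
    calc ∑ m ∈ Finset.Icc 1 k, d/(m:ℝ)
        ≤ ∑ m ∈ Finset.Icc 1 (M-1), d/(m:ℝ) := s1
      _ = d*H := s2
      _ ≤ d*L := s3
  -- product bounds
  have prod_le : ∀ k, k ≤ M - 1 → ∏ m ∈ Finset.Icc 1 k, b m / a m ≤ Real.exp (2*d*L) := by
    intro k hk
    have sub : Finset.Icc 1 k ⊆ Finset.Icc 1 (M-1) := Finset.Icc_subset_Icc_right hk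
    calc ∏ m ∈ Finset.Icc 1 k, b m / a m
        ≤ ∏ m ∈ Finset.Icc 1 k, Real.exp (2*d/((M:ℝ)-m)) :=
          Finset.prod_le_prod (fun m hm => (hba_pos m (sub hm)).le)
            (fun m hm => hba_le m (sub hm))
      _ = Real.exp (∑ m ∈ Finset.Icc 1 k, 2*d/((M:ℝ)-m)) := (Real.exp_sum _ _).symm
      _ ≤ Real.exp (2*d*L) := Real.exp_le_exp.mpr (sumg k hk)
  have prod_ge : ∀ k, k ≤ M - 1 → Real.exp (-(d*L)) ≤ ∏ m ∈ Finset.Icc 1 k, b m / a m := by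
    intro k hk
    have sub : Finset.Icc 1 k ⊆ Finset.Icc 1 (M-1) := Finset.Icc_subset_Icc_right hk
    calc Real.exp (-(d*L))
        ≤ Real.exp (∑ m ∈ Finset.Icc 1 k, -(d/(m:ℝ))) := by
          apply Real.exp_le_exp.mpr
          rw [Finset.sum_neg_distrib]
          have := sumd k hk
          linarith
      _ = ∏ m ∈ Finset.Icc 1 k, Real.exp (-(d/(m:ℝ))) := Real.exp_sum _ _
      _ ≤ ∏ m ∈ Finset.Icc 1 k, b m / a m :=
          Finset.prod_le_prod (fun m _ => (Real.exp_pos _).le)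
            (fun m hm => hba_ge m (sub hm))
  have prodab_le : ∀ k, k ≤ M - 1 → ∏ m ∈ Finset.Icc 1 k, a m / b m ≤ Real.exp (d*L) := by
    intro k hk
    have sub : Finset.Icc 1 k ⊆ Finset.Icc 1 (M-1) := Finset.Icc_subset_Icc_right hk
    calc ∏ m ∈ Finset.Icc 1 k, a m / b m
        ≤ ∏ m ∈ Finset.Icc 1 k, Real.exp (d/(m:ℝ)) :=
          Finset.prod_le_prod
            (fun m hm => (div_pos (hapos m (sub hm)) (hbpos m (sub hm))).le)
            (fun m hm => hab_le m (sub hm))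
      _ = Real.exp (∑ m ∈ Finset.Icc 1 k, d/(m:ℝ)) := (Real.exp_sum _ _).symm
      _ ≤ Real.exp (d*L) := Real.exp_le_exp.mpr (sumd k hk)
  -- bounds on the denominator sum S
  set S : ℝ := ∑ j ∈ Finset.Icc 1 M, ∏ m ∈ Finset.Icc 1 (j - 1), b m / a m with hSdef
  have hS_le : S ≤ (M:ℝ) * Real.exp (2*d*L) := by
    rw [hSdef]
    calc ∑ j ∈ Finset.Icc 1 M, ∏ m ∈ Finset.Icc 1 (j - 1), b m / a m
        ≤ ∑ _j ∈ Finset.Icc 1 M, Real.exp (2*d*L) :=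
          Finset.sum_le_sum (fun j hj => by
            rw [Finset.mem_Icc] at hj
            exact prod_le (j-1) (by omega))
      _ = (M:ℝ) * Real.exp (2*d*L) := by
          rw [Finset.sum_const, Nat.card_Icc, nsmul_eq_mul]
          norm_num
  have hS_ge : (M:ℝ) * Real.exp (-(d*L)) ≤ S := by
    rw [hSdef]
    calc (M:ℝ) * Real.exp (-(d*L))
        = ∑ _j ∈ Finset.Icc 1 M, Real.exp (-(d*L)) := by
          rw [Finset.sum_const, Nat.card_Icc, nsmul_eq_mul]
          norm_num
      _ ≤ ∑ j ∈ Finset.Icc 1 M, ∏ m ∈ Finset.Icc 1 (j - 1), b m / a m :=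
          Finset.sum_le_sum (fun j hj => by
            rw [Finset.mem_Icc] at hj
            exact prod_ge (j-1) (by omega))
  have hS_pos : 0 < S := lt_of_lt_of_le (by positivity) hS_ge
  refine ⟨?_, ?_, ?_⟩
  · rw [hP]
    exact one_div_le_one_div_of_le hS_pos hS_le
  · rw [hP]
    have h := one_div_le_one_div_of_le (by positivity) hS_ge
    have hMne : (M:ℝ) ≠ 0 := ne_of_gt hM0
    have heq : 1/((M:ℝ)*Real.exp (-(d*L))) = Real.exp (d*L)/M := by
      rw [Real.exp_neg]
      field_simp
    linarith only [h, heq]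
  · -- expected time bound
    have termbound : ∀ n ∈ Finset.Icc 1 (M-1),
        (1 / b n) * ∏ m ∈ Finset.Icc 1 (n - 1), a m / b m
        ≤ (Real.exp (d*L)/θ) * ((1/(M:ℝ)) * (1/(n:ℝ) + 1/((M:ℝ)-n))) := by
      intro n hn
      obtain ⟨h1, h2⟩ := hfacts n hn
      have hn0 : (0:ℝ) < n := by linarith
      have hMn : (0:ℝ) < (M:ℝ) - n := by linarith
      have hbn := hbpos n hn
      have hden : (0:ℝ) < θ*(n:ℝ)*((M:ℝ)-n) := mul_pos (mul_pos hθ hn0) hMn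
      have hnm : n - 1 ≤ M - 1 := by
        rw [Finset.mem_Icc] at hn; omega
      have hb1 : 1 / b n ≤ 1 / (θ*(n:ℝ)*((M:ℝ)-n)) := by
        apply one_div_le_one_div_of_le hden
        rw [hb]
        exact mul_le_mul_of_nonneg_left (by linarith) (by positivity)
      have hp := prodab_le (n-1) hnm
      have hpnn : 0 ≤ ∏ m ∈ Finset.Icc 1 (n - 1), a m / b m := by
        apply Finset.prod_nonneg
        intro m hm
        have hm' := (Finset.Icc_subset_Icc_right hnm) hm
        exact (div_pos (hapos m hm') (hbpos m hm')).le
      have h3 : (1 / b n) * ∏ m ∈ Finset.Icc 1 (n - 1), a m / b m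
          ≤ (1 / (θ*(n:ℝ)*((M:ℝ)-n))) * Real.exp (d*L) :=
        mul_le_mul hb1 hp hpnn (by positivity)
      have heq : (1 / (θ*(n:ℝ)*((M:ℝ)-n))) * Real.exp (d*L)
          = (Real.exp (d*L)/θ) * ((1/(M:ℝ)) * (1/(n:ℝ) + 1/((M:ℝ)-n))) :=
        aux_eq1 θ (n:ℝ) ((M:ℝ)-n) (M:ℝ) _ (ne_of_gt hθ) (ne_of_gt hn0)
          (ne_of_gt hMn) (ne_of_gt hM0) (by ring)
      linarith only [h3, heq]
    have hsum1 : ∑ n ∈ Finset.Icc 1 (M - 1),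
        (1 / b n) * ∏ m ∈ Finset.Icc 1 (n - 1), a m / b m
        ≤ ∑ n ∈ Finset.Icc 1 (M-1),
          (Real.exp (d*L)/θ) * ((1/(M:ℝ)) * (1/(n:ℝ) + 1/((M:ℝ)-n))) :=
      Finset.sum_le_sum termbound
    have hsum2 : ∑ n ∈ Finset.Icc 1 (M-1),
        (Real.exp (d*L)/θ) * ((1/(M:ℝ)) * (1/(n:ℝ) + 1/((M:ℝ)-n)))
        = (Real.exp (d*L)/θ) * ((1/(M:ℝ)) * (2*H)) := by
      rw [← Finset.mul_sum, ← Finset.mul_sum, Finset.sum_add_distrib, hreflect, ← hHdef]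
      ring_nf
    have hfinal : (Real.exp (d*L)/θ) * ((1/(M:ℝ)) * (2*H))
        ≤ Real.exp (d*L) * (2*L) / (θ*M) := by
      have hle : (Real.exp (d*L)/θ) * ((1/(M:ℝ)) * (2*H))
          ≤ (Real.exp (d*L)/θ) * ((1/(M:ℝ)) * (2*L)) := by
        have h2 : 2*H ≤ 2*L := by linarith only [hHL]
        exact mul_le_mul_of_nonneg_left
          (mul_le_mul_of_nonneg_left h2 (one_div_nonneg.mpr hM0.le))
          (div_nonneg (Real.exp_pos _).le hθ.le)
      have heq : (Real.exp (d*L)/θ) * ((1/(M:ℝ)) * (2*L))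
          = Real.exp (d*L) * (2*L) / (θ*M) :=
        aux_eq2 θ (M:ℝ) _ _ (ne_of_gt hθ) (ne_of_gt hM0)
      exact le_of_le_of_eq hle heq
    exact hE.trans (hsum1.trans (hsum2.le.trans hfinal))
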